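/- arXiv:1106.4735 — 2 statements merged into one kernel-verified Lean document; each statement's English description precedes it below -/
import Mathlib

section
/- Suppose μ_i (i ∈ ℕ) are elements of Pr(𝕋) with μ_iˆμ_i = μ_i for every i, and there are sets E_i ⊆ 𝕋 such that μ_i(E_j) = 1 if i = j and μ_i(E_j) = 0 if i ≠ j. Then any weak* limit point μ of the set {μ_i : i ∈ ℕ} satisfies μˆμ ≠ μ. -/
open scoped Classical

/-- The free binary system (free magma) on one generator. -/
abbrev 𝕋 : Type := FreeMagma Unit

/-- The generator `1` of `𝕋`. -/
def e1 : 𝕋 := FreeMagma.of ()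

/-- `#(t)`: the number of occurrences of the generator in `t`. -/
def cnt : 𝕋 → ℕ
  | FreeMagma.of _ => 1
  | FreeMagma.mul a b => cnt a + cnt b

/-- The space `ℓ^∞(S)` of bounded real-valued functions on `S`. -/
def Bdd (S : Type*) : Type _ := {f : S → ℝ // ∃ M, ∀ s, |f s| ≤ M}

/-- Package a function as an element of `Bdd S` (junk value if unbounded). -/
noncomputable def liftBdd {S : Type*} (g : S → ℝ) : Bdd S :=
  if h : ∃ M, ∀ s, |g s| ≤ M then ⟨g, h⟩ else ⟨fun _ => 0, 0, fun _ => by simp⟩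

/-- The constant function as an element of `Bdd S`. -/
def constB (S : Type*) (c : ℝ) : Bdd S := ⟨fun _ => c, |c|, fun _ => le_rfl⟩

/-- The characteristic function of `E` as an element of `Bdd S`. -/
noncomputable def indB {S : Type*} (E : Set S) : Bdd S :=
  liftBdd (fun s => if s ∈ E then 1 else 0)

/-- `Pr S`: finitely additive probability measures on `S`, identified with the
positive normalized linear functionals on `ℓ^∞(S)`.  The weak* topology is the
subspace topology inherited from the product topology on `Bdd S → ℝ`. -/
def PrSet (S : Type*) : Set (Bdd S → ℝ) :=
  {φ | (∀ f g h : Bdd S, (∀ s, h.1 s = f.1 s + g.1 s) → φ h = φ f + φ g) ∧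
       (∀ (c : ℝ) (f g : Bdd S), (∀ s, g.1 s = c * f.1 s) → φ g = c * φ f) ∧
       (∀ f : Bdd S, (∀ s, 0 ≤ f.1 s) → 0 ≤ φ f) ∧
       φ (constB S 1) = 1}

/-- `μ(E)`: the measure of a set `E ⊆ S`. -/
noncomputable def mE {S : Type*} (φ : Bdd S → ℝ) (E : Set S) : ℝ := φ (indB E)

/-- The product `μ ⊗ ν` of finitely additive measures:
`μ⊗ν(f) = μ(x ↦ ν(y ↦ f(x,y)))`. -/
noncomputable def prodM {S T : Type*} (φ : Bdd S → ℝ) (ψ : Bdd T → ℝ) :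
    Bdd (S × T) → ℝ :=
  fun f => φ (liftBdd fun x => ψ (liftBdd fun y => f.1 (x, y)))

/-- The extension of a binary operation `op` on `S` to `Pr S`:
`μ⋆ν(f) = μ(x ↦ ν(y ↦ f(x ⋆ y)))`. -/
noncomputable def starM {S : Type*} (op : S → S → S) (φ ψ : Bdd S → ℝ) :
    Bdd S → ℝ :=
  fun f => φ (liftBdd fun x => ψ (liftBdd fun y => f.1 (op x y)))

/-- The extension of `ˆ` to `Pr 𝕋`. -/
noncomputable def hmul (φ ψ : Bdd 𝕋 → ℝ) : Bdd 𝕋 → ℝ := starM (· * ·) φ ψ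

/-- Finitely supported probability measures: finite convex combinations of
point evaluations. -/
def FinSuppPr (S : Type*) : Set (Bdd S → ℝ) :=
  {φ | ∃ (F : Finset S) (w : S → ℝ), (∀ s ∈ F, 0 ≤ w s) ∧ (∑ s ∈ F, w s) = 1 ∧
      ∀ f : Bdd S, φ f = ∑ s ∈ F, w s * f.1 s}

/-- `𝔸_n`: finitely supported probability measures concentrated on `𝕋_n`. -/
def Asets (n : ℕ) : Set (Bdd 𝕋 → ℝ) :=
  {φ | ∃ (F : Finset 𝕋) (w : 𝕋 → ℝ), (∀ t ∈ F, cnt t = n) ∧ (∀ t ∈ F, 0 ≤ w t) ∧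
      (∑ t ∈ F, w t) = 1 ∧ ∀ f : Bdd 𝕋, φ f = ∑ t ∈ F, w t * f.1 t}

/-- The extension of `+` on `ℕ` to ultrafilters: `A ∈ U+V` iff
`{m : {n : m+n ∈ A} ∈ V} ∈ U`. -/
noncomputable def addU (U V : Ultrafilter ℕ) : Ultrafilter ℕ :=
  U.bind fun m => V.map fun n => m + n

/-- `𝔸_U`: the `U`-limit of the sets `𝔸_m`. -/
def AU (U : Ultrafilter ℕ) : Set (Bdd 𝕋 → ℝ) :=
  {μ | μ ∈ PrSet 𝕋 ∧ ∀ W : Set (Bdd 𝕋 → ℝ), IsOpen W → μ ∈ W →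
      {m : ℕ | (W ∩ Asets m).Nonempty} ∈ U}

/-- The extension of `ˆ` to ultrafilters on `𝕋`: `E ∈ UˆV` iff
`{u : {v : uˆv ∈ E} ∈ V} ∈ U`. -/
noncomputable def umul (U V : Ultrafilter 𝕋) : Ultrafilter 𝕋 :=
  U.bind fun u => V.map fun v => u * v

/-- Substitution of measures into a term `t`:
`t(μ_0,…,μ_{m-1})(f)` is the nested integral
`μ_0(x_0 ↦ ⋯ μ_{m-1}(x_{m-1} ↦ f(t(x⃗)))⋯)`. -/
noncomputable def substM : 𝕋 → List (Bdd 𝕋 → ℝ) → (Bdd 𝕋 → ℝ)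
  | FreeMagma.of _, μs => μs.headI
  | FreeMagma.mul a b, μs =>
      hmul (substM a (μs.take (cnt a))) (substM b (μs.drop (cnt a)))

/-- `t_k`: iteratively remove the carets of `t` involving only leaves of index
greater than `k`. -/
def tk : 𝕋 → ℕ → 𝕋
  | FreeMagma.of _, _ => e1
  | FreeMagma.mul a b, k => if k < cnt a then tk a k * e1 else a * tk b (k - cnt a)

/-- `l_k(t) = #(t_k) - 2` (truncated subtraction). -/
def lk (t : 𝕋) (k : ℕ) : ℕ := cnt (tk t k) - 2

/-- The subterm `t/σ` of `t` at address `σ` (`false` = left/`0`, `true` = right/`1`). -/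
def subT : 𝕋 → List Bool → Option 𝕋
  | t, [] => some t
  | FreeMagma.of _, _ :: _ => none
  | FreeMagma.mul a b, c :: σ => if c then subT b σ else subT a σ

/-- `σ <_lex ς` for incompatible binary sequences: at the first coordinate where
they differ, `σ` has `0` and `ς` has `1`. -/
def lexLT (σ ς : List Bool) : Prop :=
  ∃ p σ' ς', σ = p ++ (false :: σ') ∧ ς = p ++ (true :: ς')

/-- `x₀·E`. -/
def x0E (E : Set 𝕋) : Set 𝕋 :=
  {x | ∃ a b c : 𝕋, x = a * (b * c) ∧ (a * b) * c ∈ E}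

/-- `x₁·E`. -/
def x1E (E : Set 𝕋) : Set 𝕋 :=
  {x | ∃ s a b c : 𝕋, x = s * (a * (b * c)) ∧ s * ((a * b) * c) ∈ E}

/-- `u_σ` for a nonempty finite binary sequence `σ`. -/
def uSeq : List Bool → 𝕋
  | [] => e1
  | [_] => e1
  | b :: σ => if b then e1 * uSeq σ else uSeq σ * e1

/-- `a ≪ b`: for some `p`, `#(a) < 2^p` and `2^p` divides `#(b)`. -/
def ll (a b : 𝕋) : Prop := ∃ p : ℕ, cnt a < 2 ^ p ∧ 2 ^ p ∣ cnt b

/-- `r↾n`: the first `n` values of `r` as a finite binary sequence. -/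
def rList (r : ℕ → Bool) (n : ℕ) : List Bool := (List.range n).map r

/-- The map `h_r : 𝕋 → 𝕋`. -/
noncomputable def hr (r : ℕ → Bool) : 𝕋 → 𝕋
  | FreeMagma.of _ => uSeq (rList r 1)
  | FreeMagma.mul a b =>
      if ll a b then hr r a * hr r b else uSeq (rList r (cnt a + cnt b))

/-- The action of `h_r` on measures: `h_r(μ)(f) = μ(f ∘ h_r)`. -/
noncomputable def hrM (r : ℕ → Bool) (φ : Bdd 𝕋 → ℝ) : Bdd 𝕋 → ℝ :=
  fun f => φ (liftBdd fun t => f.1 (hr r t))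

/-- `lev`: `l(1) = 0`, `l(aˆb) = l(a) + 1`. -/
def lev : 𝕋 → ℕ
  | FreeMagma.of _ => 0
  | FreeMagma.mul a _ => lev a + 1

/-- `C` is closed under `ˆ`. -/
def HClosed (C : Set (Bdd 𝕋 → ℝ)) : Prop := ∀ μ ∈ C, ∀ ν ∈ C, hmul μ ν ∈ C

section AuxProof

lemma liftBdd_val {S : Type*} (g : S → ℝ) (h : ∃ M, ∀ s, |g s| ≤ M) :
    (liftBdd g).1 = g := by
  have hl : liftBdd g = (⟨g, h⟩ : Bdd S) := dif_pos h
  rw [hl]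

lemma ind_bdd {S : Type*} (E : Set S) :
    ∃ M, ∀ s, |(fun s => if s ∈ E then (1:ℝ) else 0) s| ≤ M :=
  ⟨1, fun s => by dsimp only; split <;> norm_num⟩

lemma indB_val {S : Type*} (E : Set S) :
    (indB E).1 = fun s => if s ∈ E then 1 else 0 :=
  liftBdd_val _ (ind_bdd E)

lemma eq_of_forall_abs_sub_lt (a b : ℝ) (h : ∀ ε > 0, |a - b| < ε) : a = b := by
  by_contra hne
  exact lt_irrefl _ (h (|a - b|) (abs_pos.mpr (sub_ne_zero.mpr hne)))

section PrLemmas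

variable {S : Type*} {φ : Bdd S → ℝ} (hφ : φ ∈ PrSet S)
include hφ

lemma prZero (f : Bdd S) (hf : ∀ s, f.1 s = 0) : φ f = 0 := by
  have := hφ.2.1 0 f f (fun s => by rw [hf s]; ring)
  simpa using this

lemma prMono (f g : Bdd S) (hfg : ∀ s, f.1 s ≤ g.1 s) : φ f ≤ φ g := by
  obtain ⟨Mf, hMf⟩ := f.2
  obtain ⟨Mg, hMg⟩ := g.2
  have hb : ∃ M, ∀ s, |g.1 s - f.1 s| ≤ M :=
    ⟨Mg + Mf, fun s => (abs_sub _ _).trans (add_le_add (hMg s) (hMf s))⟩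
  have hval : (liftBdd (fun s => g.1 s - f.1 s)).1 = fun s => g.1 s - f.1 s :=
    liftBdd_val _ hb
  have hadd := hφ.1 f (liftBdd (fun s => g.1 s - f.1 s)) g (fun s => by rw [hval]; ring)
  have hpos := hφ.2.2.1 (liftBdd (fun s => g.1 s - f.1 s))
    (fun s => by rw [hval]; dsimp only; linarith [hfg s])
  linarith

lemma mE_nonneg (E : Set S) : 0 ≤ mE φ E := by
  refine hφ.2.2.1 _ ?_
  rw [indB_val]
  intro s; dsimp only; split <;> norm_num

lemma mE_le_one (E : Set S) : mE φ E ≤ 1 := by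
  have := prMono hφ (indB E) (constB S 1) ?_
  · unfold mE; rw [hφ.2.2.2] at this; exact this
  · rw [indB_val]
    intro s; show (if s ∈ E then (1:ℝ) else 0) ≤ 1
    split <;> norm_num

lemma mE_mono {A C : Set S} (h : A ⊆ C) : mE φ A ≤ mE φ C := by
  refine prMono hφ _ _ ?_
  rw [indB_val, indB_val]
  intro s; dsimp only
  by_cases hs : s ∈ A
  · rw [if_pos hs, if_pos (h hs)]
  · rw [if_neg hs]; split <;> norm_num

lemma mE_union_le (A C : Set S) : mE φ (A ∪ C) ≤ mE φ A + mE φ C := by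
  have hb : ∃ M, ∀ s, |(fun s => (if s ∈ A then (1:ℝ) else 0) + (if s ∈ C then 1 else 0)) s| ≤ M :=
    ⟨2, fun s => by dsimp only; split <;> split <;> norm_num⟩
  have hval := liftBdd_val _ hb
  have hadd := hφ.1 (indB A) (indB C)
      (liftBdd (fun s => (if s ∈ A then (1:ℝ) else 0) + (if s ∈ C then 1 else 0)))
      (fun s => by rw [hval, indB_val, indB_val])
  have hmono := prMono hφ (indB (A ∪ C))
      (liftBdd (fun s => (if s ∈ A then (1:ℝ) else 0) + (if s ∈ C then 1 else 0))) ?_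
  · unfold mE; linarith
  · rw [indB_val, hval]
    intro s; dsimp only
    by_cases hs : s ∈ A ∪ C
    · rw [if_pos hs]
      rcases hs with hs | hs
      · rw [if_pos hs]; split <;> norm_num
      · rw [if_pos hs]; split <;> norm_num
    · rw [if_neg hs]
      rw [if_neg (fun h => hs (Or.inl h)), if_neg (fun h => hs (Or.inr h))]
      norm_num

lemma mE_diff_ge (A C : Set S) : mE φ A - mE φ C ≤ mE φ (A \ C) := by
  have h := mE_union_le hφ (A \ C) C
  have h2 : A ⊆ (A \ C) ∪ C := by
    intro s hs
    by_cases hc : s ∈ C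
    · exact Or.inr hc
    · exact Or.inl ⟨hs, hc⟩
  have h3 := mE_mono hφ h2
  linarith

end PrLemmas

/-- Union of the first `n` sets. -/
def Uset (E : ℕ → Set 𝕋) (n : ℕ) : Set 𝕋 := {t | ∃ j, j < n ∧ t ∈ E j}

/-- Disjointification. -/
def Eprime (E : ℕ → Set 𝕋) (i : ℕ) : Set 𝕋 := E i \ Uset E i

/-- `A · A`. -/
def Sset (A : Set 𝕋) : Set 𝕋 := {t | ∃ a ∈ A, ∃ b ∈ A, t = a * b}

/-- `⋃ i, E'_i · E'_i`. -/
def Bset (E : ℕ → Set 𝕋) : Set 𝕋 := {t | ∃ i, t ∈ Sset (Eprime E i)}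

lemma mem_Sset {A : Set 𝕋} {x y : 𝕋} : x * y ∈ Sset A ↔ x ∈ A ∧ y ∈ A := by
  constructor
  · rintro ⟨a, ha, b, hb, h⟩
    rw [show x * y = x.mul y from rfl, show a * b = a.mul b from rfl] at h
    obtain ⟨h1, h2⟩ : x = a ∧ y = b := by injection h with h1 h2; exact ⟨h1, h2⟩
    exact ⟨h1 ▸ ha, h2 ▸ hb⟩
  · rintro ⟨hx, hy⟩; exact ⟨x, hx, y, hy, rfl⟩

lemma Eprime_disj {E : ℕ → Set 𝕋} {x : 𝕋} {i j : ℕ}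
    (hi : x ∈ Eprime E i) (hj : x ∈ Eprime E j) : i = j := by
  rcases lt_trichotomy i j with h | h | h
  · exact absurd ⟨i, h, hi.1⟩ hj.2
  · exact h
  · exact absurd ⟨j, h, hj.1⟩ hi.2

lemma hmul_indB_eval (φ ψ : Bdd 𝕋 → ℝ) (C : Set 𝕋) (G : 𝕋 → ℝ)
    (hG : ∀ x, ψ (liftBdd fun y => if x * y ∈ C then (1:ℝ) else 0) = G x) :
    hmul φ ψ (indB C) = φ (liftBdd G) := by
  show φ _ = φ _
  congr 1
  apply congrArg
  funext x
  rw [← hG x]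
  apply congrArg
  apply congrArg
  funext y
  rw [indB_val]

end AuxProof

/-- Proposition 6.1: a weak* limit point of a sequence of
idempotents with pairwise "orthogonal" witnessing sets is not idempotent. -/
theorem limit_of_orthogonal_idempotents_not_idempotent
    (μs : ℕ → (Bdd 𝕋 → ℝ)) (hpr : ∀ i, μs i ∈ PrSet 𝕋)
    (hid : ∀ i, hmul (μs i) (μs i) = μs i)
    (E : ℕ → Set 𝕋)
    (hE : ∀ i j, mE (μs i) (E j) = if i = j then 1 else 0)
    (μ : Bdd 𝕋 → ℝ) (hμ : AccPt μ (Filter.principal (Set.range μs))) :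
    hmul μ μ ≠ μ := by
  intro hidem
  -- the zero test function evaluates to 0 on each μs k
  have hzero : ∀ k, μs k (liftBdd fun _ : 𝕋 => (0:ℝ)) = 0 := fun k =>
    prZero (hpr k) _ (fun s => by rw [liftBdd_val _ ⟨0, fun s => by norm_num⟩])
  -- limit point extraction
  have key : ∀ (L : List (Bdd 𝕋)) (ε : ℝ), 0 < ε →
      ∃ k, μs k ≠ μ ∧ ∀ f ∈ L, |μs k f - μ f| < ε := by
    intro L ε hε
    have hUopen : IsOpen {φ : Bdd 𝕋 → ℝ | ∀ f ∈ L, |φ f - μ f| < ε} := by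
      have hset : {φ : Bdd 𝕋 → ℝ | ∀ f ∈ L, |φ f - μ f| < ε}
          = ⋂ f ∈ L.toFinset, {φ : Bdd 𝕋 → ℝ | |φ f - μ f| < ε} := by
        ext ψ; simp [List.mem_toFinset]
      rw [hset]
      refine Set.Finite.isOpen_biInter (L.toFinset.finite_toSet) (fun f _ => ?_)
      have hpre : {φ : Bdd 𝕋 → ℝ | |φ f - μ f| < ε}
          = (fun φ : Bdd 𝕋 → ℝ => φ f) ⁻¹' (Metric.ball (μ f) ε) := by
        ext ψ; simp [Metric.mem_ball, Real.dist_eq]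
      rw [hpre]
      exact (continuous_apply f).isOpen_preimage _ Metric.isOpen_ball
    have hUmem : {φ : Bdd 𝕋 → ℝ | ∀ f ∈ L, |φ f - μ f| < ε} ∈ nhds μ :=
      hUopen.mem_nhds (fun f _ => by simpa using hε)
    obtain ⟨y, ⟨hyU, hyR⟩, hyne⟩ := (accPt_iff_nhds (x := μ) (C := Set.range μs)).mp hμ _ hUmem
    obtain ⟨k, rfl⟩ := hyR
    exact ⟨k, hyne, hyU⟩
  -- μ of the zero function is 0
  have hfact0 : μ (liftBdd fun _ : 𝕋 => (0:ℝ)) = 0 := by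
    refine eq_of_forall_abs_sub_lt _ _ (fun ε hε => ?_)
    obtain ⟨k, -, h⟩ := key [liftBdd fun _ : 𝕋 => (0:ℝ)] ε hε
    have h1 := h (liftBdd fun _ : 𝕋 => (0:ℝ)) (by simp)
    rw [hzero k] at h1
    rwa [abs_sub_comm] at h1
  -- μ is not equal to any μs j
  have hne : ∀ j, μ ≠ μs j := by
    intro j hmj
    obtain ⟨k, hkne, h⟩ := key [indB (E j)] (1/2) (by norm_num)
    have hkj : k ≠ j := fun h' => hkne (by rw [h', ← hmj])
    have h1 := h (indB (E j)) (by simp)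
    have h2 : μs k (indB (E j)) = 0 := by
      have := hE k j; rwa [if_neg hkj] at this
    have h3 : μ (indB (E j)) = 1 := by
      have := hE j j; rw [if_pos rfl] at this; rw [hmj]; exact this
    rw [h2, h3] at h1
    norm_num at h1
  -- values of μs k on the disjointified sets
  have hEpr_val : ∀ k i, k ≠ i → mE (μs k) (Eprime E i) = 0 := by
    intro k i hki
    have h1 : mE (μs k) (E i) = 0 := by have := hE k i; rwa [if_neg hki] at this
    have h2 : mE (μs k) (Eprime E i) ≤ mE (μs k) (E i) :=
      mE_mono (hpr k) (fun x hx => hx.1)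
    have h3 := mE_nonneg (hpr k) (Eprime E i)
    linarith
  -- μ of each disjointified set is 0
  have hmuE' : ∀ i, μ (indB (Eprime E i)) = 0 := by
    intro i
    have hex : ∃ f, μ f ≠ μs i f := by
      by_contra hc
      push_neg at hc
      exact hne i (funext hc)
    obtain ⟨fi, hfi⟩ := hex
    refine eq_of_forall_abs_sub_lt _ _ (fun ε hε => ?_)
    have hδ : 0 < |μ fi - μs i fi| := abs_pos.mpr (sub_ne_zero.mpr hfi)
    obtain ⟨k, hkne, h⟩ := key [indB (Eprime E i), fi] (min ε (|μ fi - μs i fi|))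
      (lt_min hε hδ)
    have hki : k ≠ i := by
      intro h'
      subst h'
      have h2 := h fi (by simp)
      rw [abs_sub_comm] at h2
      exact absurd (lt_of_lt_of_le h2 (min_le_right _ _)) (lt_irrefl _)
    have h1 := h (indB (Eprime E i)) (by simp)
    have h2 : μs k (indB (Eprime E i)) = 0 := hEpr_val k i hki
    rw [h2, abs_sub_comm] at h1
    exact lt_of_lt_of_le h1 (min_le_left _ _)
  -- the first n sets have measure 0 under μs k for n ≤ k
  have hUzero : ∀ k n, n ≤ k → mE (μs k) (Uset E n) = 0 := by
    intro k n
    induction n with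
    | zero =>
        intro _
        apply prZero (hpr k)
        rw [indB_val]
        intro s
        dsimp only
        rw [if_neg]
        rintro ⟨j, hj, -⟩
        omega
    | succ n ih =>
        intro hnk
        have hU : Uset E (n+1) = Uset E n ∪ E n := by
          ext t
          constructor
          · rintro ⟨j, hj, ht⟩
            rcases Nat.lt_succ_iff_lt_or_eq.mp hj with h | h
            · exact Or.inl ⟨j, h, ht⟩
            · subst h; exact Or.inr ht
          · rintro (⟨j, hj, ht⟩ | ht)
            · exact ⟨j, Nat.lt_succ_of_lt hj, ht⟩
            · exact ⟨n, Nat.lt_succ_self n, ht⟩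
        have hEn : mE (μs k) (E n) = 0 := by
          have := hE k n; rwa [if_neg (by omega)] at this
        have h1 := mE_union_le (hpr k) (Uset E n) (E n)
        rw [ih (by omega), hEn] at h1
        have h2 := mE_nonneg (hpr k) (Uset E n ∪ E n)
        rw [hU]
        linarith
  -- μs k gives full measure to its own disjointified set
  have hEprk : ∀ k, mE (μs k) (Eprime E k) = 1 := by
    intro k
    have h1 : mE (μs k) (E k) = 1 := by have := hE k k; rwa [if_pos rfl] at this
    have h2 : mE (μs k) (E k) - mE (μs k) (Uset E k) ≤ mE (μs k) (Eprime E k) :=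
      mE_diff_ge (hpr k) (E k) (Uset E k)
    rw [h1, hUzero k k le_rfl] at h2
    have h3 := mE_le_one (hpr k) (Eprime E k)
    linarith
  -- by idempotence, μs k gives full measure to Sset (Eprime E k)
  have hSset : ∀ k, mE (μs k) (Sset (Eprime E k)) = 1 := by
    intro k
    have hG : ∀ x, μs k (liftBdd fun y => if x * y ∈ Sset (Eprime E k) then (1:ℝ) else 0)
        = (fun x => if x ∈ Eprime E k then (1:ℝ) else 0) x := by
      intro x
      dsimp only
      by_cases hx : x ∈ Eprime E k
      · have hfun : (fun y => if x * y ∈ Sset (Eprime E k) then (1:ℝ) else 0)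
            = fun y => if y ∈ Eprime E k then 1 else 0 := by
          funext y
          by_cases hy : y ∈ Eprime E k
          · rw [if_pos (mem_Sset.mpr ⟨hx, hy⟩), if_pos hy]
          · rw [if_neg (fun h => hy (mem_Sset.mp h).2), if_neg hy]
        rw [hfun, if_pos hx]
        exact hEprk k
      · have hfun : (fun y => if x * y ∈ Sset (Eprime E k) then (1:ℝ) else 0)
            = fun _ => (0:ℝ) := by
          funext y
          rw [if_neg (fun h => hx (mem_Sset.mp h).1)]
        rw [hfun, if_neg hx]
        exact hzero k
    have heval := hmul_indB_eval (μs k) (μs k) (Sset (Eprime E k)) _ hG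
    rw [hid k] at heval
    show μs k (indB (Sset (Eprime E k))) = 1
    rw [heval]
    exact hEprk k
  -- hence μs k (Bset E) = 1 for all k
  have hBk : ∀ k, μs k (indB (Bset E)) = 1 := by
    intro k
    have hsub : Sset (Eprime E k) ⊆ Bset E := fun t ht => ⟨k, ht⟩
    have h1 := mE_mono (hpr k) hsub
    rw [hSset k] at h1
    have h2 := mE_le_one (hpr k) (Bset E)
    show mE (μs k) (Bset E) = 1
    linarith
  -- hence μ (Bset E) = 1
  have hmuB : μ (indB (Bset E)) = 1 := by
    refine eq_of_forall_abs_sub_lt _ _ (fun ε hε => ?_)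
    obtain ⟨k, -, h⟩ := key [indB (Bset E)] ε hε
    have h1 := h (indB (Bset E)) (by simp)
    rw [hBk k] at h1
    rwa [abs_sub_comm] at h1
  -- but idempotence of μ forces μ (Bset E) = 0
  have hG : ∀ x, μ (liftBdd fun y => if x * y ∈ Bset E then (1:ℝ) else 0)
      = (fun _ : 𝕋 => (0:ℝ)) x := by
    intro x
    dsimp only
    by_cases hx : ∃ i, x ∈ Eprime E i
    · obtain ⟨i, hxi⟩ := hx
      have hfun : (fun y => if x * y ∈ Bset E then (1:ℝ) else 0)
          = fun y => if y ∈ Eprime E i then (1:ℝ) else 0 := by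
        funext y
        by_cases hy : y ∈ Eprime E i
        · rw [if_pos ⟨i, mem_Sset.mpr ⟨hxi, hy⟩⟩, if_pos hy]
        · rw [if_neg, if_neg hy]
          rintro ⟨j, hj⟩
          obtain ⟨hxj, hyj⟩ := mem_Sset.mp hj
          exact hy ((Eprime_disj hxj hxi) ▸ hyj)
      rw [hfun]
      exact hmuE' i
    · have hfun : (fun y => if x * y ∈ Bset E then (1:ℝ) else 0)
          = fun _ : 𝕋 => (0:ℝ) := by
        funext y
        rw [if_neg]
        rintro ⟨j, hj⟩
        exact hx ⟨j, (mem_Sset.mp hj).1⟩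
      rw [hfun]
      exact hfact0
  have hfin := hmul_indB_eval μ μ (Bset E) _ hG
  rw [hidem, hmuB, hfact0] at hfin
  norm_num at hfin
end

section
/- Let U be an idempotent ultrafilter on (ℕ,+). If μ ∈ 𝔸_U, then for every p ∈ ℕ, μ({t ∈ 𝕋 : 2^p divides #(t)}) = 1. -/
open scoped Classical

lemma indB_apply {S : Type*} (E : Set S) (s : S) :
    (indB E).1 s = if s ∈ E then 1 else 0 := by
  have h : ∃ M, ∀ s : S, |if s ∈ E then (1:ℝ) else 0| ≤ M := ⟨1, fun s => by split <;> simp⟩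
  unfold indB liftBdd
  exact congrFun (congrArg (fun x : Bdd S => x.1) (dif_pos h)) s

lemma mem_addU {U V : Ultrafilter ℕ} {A : Set ℕ} :
    A ∈ addU U V ↔ {m | {n | m + n ∈ A} ∈ V} ∈ U := by
  rfl

lemma dvd_mem_idem (U : Ultrafilter ℕ) (hU : addU U U = U) (k : ℕ) (hk : 0 < k) :
    {n : ℕ | k ∣ n} ∈ U := by
  obtain ⟨i, hi, hiU⟩ : ∃ i ∈ Set.Iio k, {m : ℕ | m % k = i} ∈ U := by
    rw [← Ultrafilter.finite_biUnion_mem_iff (Set.finite_Iio k)]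
    have : (⋃ i ∈ Set.Iio k, {m : ℕ | m % k = i}) = Set.univ := by
      ext m; simp only [Set.mem_iUnion, Set.mem_setOf_eq, Set.mem_univ, iff_true,
        Set.mem_Iio]
      exact ⟨m % k, Nat.mod_lt _ hk, rfl⟩
    rw [this]; exact Filter.univ_mem
  have hB : {m : ℕ | m % k = i} ∈ addU U U := by rw [hU]; exact hiU
  rw [mem_addU] at hB
  obtain ⟨m, hm1, hm2⟩ := (Filter.nonempty_of_mem (Filter.inter_mem hB hiU) :
    ({m | {n | (m + n) % k = i} ∈ U} ∩ {m | m % k = i}).Nonempty)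
  refine Filter.mem_of_superset hm1 fun n hn => ?_
  simp only [Set.mem_setOf_eq] at hn hm2 ⊢
  have hmod : (m + n) % k = m % k := by rw [hn, hm2]
  have h2 : n ≡ 0 [MOD k] :=
    Nat.ModEq.add_left_cancel' m (show (m + n) % k = (m + 0) % k by simpa using hmod)
  exact Nat.modEq_zero_iff_dvd.mp h2

/-- every `μ ∈ 𝔸_U` concentrates on terms whose size is divisible
by `2^p`, for every `p`. -/
theorem AU_concentrates_on_divisible (U : Ultrafilter ℕ) (hU : addU U U = U)
    (μ : Bdd 𝕋 → ℝ) (hμ : μ ∈ AU U) (p : ℕ) :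
    mE μ {t : 𝕋 | 2 ^ p ∣ cnt t} = 1 := by
  set f : Bdd 𝕋 := indB {t : 𝕋 | 2 ^ p ∣ cnt t} with hf
  by_contra hne
  have hW : IsOpen ((fun φ : Bdd 𝕋 → ℝ => φ f) ⁻¹' {(1:ℝ)}ᶜ) :=
    (isOpen_compl_singleton (x := (1:ℝ))).preimage (continuous_apply f)
  have hS := hμ.2 _ hW hne
  have hD := dvd_mem_idem U hU (2 ^ p) (Nat.pow_pos (n := p) (by norm_num))
  obtain ⟨m, hmS, hmD⟩ := Filter.nonempty_of_mem (Filter.inter_mem hS hD)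
  obtain ⟨ν, hνW, F, w, hcnt, hw0, hw1, hνf⟩ := hmS
  simp only [Set.mem_preimage, Set.mem_compl_iff, Set.mem_singleton_iff] at hνW
  apply hνW
  rw [hνf f, ← hw1]
  refine Finset.sum_congr rfl fun t ht => ?_
  rw [hf, indB_apply, if_pos, mul_one]
  rw [Set.mem_setOf_eq, hcnt t ht]
  exact hmD
end
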